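/- Let v ∈ [0,1)^𝑁 and u ∈ [0, ρ(v)). Define H(x) = B_𝑁(x,v) + B̄_𝑁(x) − b_1·x, y_0(t) = u for all t ≥ 0, and recursively y_{n+1}(t) = e^{b_1 t}·(u + ∫_0^t e^{−b_1 s} H(y_n(s)) ds). Then for every n ≥ 0 and every t ≥ 0 one has u ≤ y_n(t) < ρ(v) and y_{n+1}(t) ≥ y_n(t). -/

import Mathlib

/-- Let `v ∈ [0,1)^N` and `u ∈ [0,ρ(v))`. With
`H(x) = B_N(x,v) + B̄_N(x) − b₁x`, `y₀(t) = u` and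
`y_{n+1}(t) = e^{b₁t}(u + ∫₀ᵗ e^{−b₁s} H(y_n(s)) ds)`, one has, for all `n ≥ 0` and
`t ≥ 0`: `u ≤ y_n(t) < ρ(v)` and `y_{n+1}(t) ≥ y_n(t)`. -/
theorem stmt_9
    (b : ℕ → ℝ)
    (hb_nonneg : ∀ j : ℕ, j ≠ 1 → 0 ≤ b j)
    (hb1 : b 1 < 0)
    (hb_sum : HasSum (fun j : ℕ => if j = 1 then 0 else b j) (-(b 1)))
    (N : Finset ℕ) (hN : N.Nonempty) (h1N : (1 : ℕ) ∉ N)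
    (hbN : ∀ k ∈ N, 0 < b k)
    (v : ℕ → ℝ) (hv : ∀ j ∈ N, v j ∈ Set.Ico (0 : ℝ) 1)
    (ρv : ℝ)
    (hρv : IsLeast {w : ℝ | w ∈ Set.Icc (0 : ℝ) 1 ∧
        (∑' j : ℕ, if j ∈ N then 0 else b j * w ^ j)
          + (∑ j ∈ N, b j * v j * w ^ j) = 0} ρv)
    (u : ℝ) (hu : u ∈ Set.Ico 0 ρv)
    (H : ℝ → ℝ)
    (hH : ∀ x : ℝ, H x = (∑ j ∈ N, b j * v j * x ^ j)
        + (∑' j : ℕ, if j ∈ N then 0 else b j * x ^ j) - b 1 * x)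
    (y : ℕ → ℝ → ℝ)
    (hy0 : ∀ t : ℝ, y 0 t = u)
    (hyrec : ∀ (n : ℕ) (t : ℝ), y (n + 1) t =
      Real.exp (b 1 * t) * (u + ∫ s in (0 : ℝ)..t, Real.exp (-(b 1 * s)) * H (y n s))) :
    ∀ (n : ℕ) (t : ℝ), 0 ≤ t →
      u ≤ y n t ∧ y n t < ρv ∧ y n t ≤ y (n + 1) t := by
  classical
  obtain ⟨hu0, huρ⟩ := hu
  obtain ⟨⟨⟨hρ0, hρ1⟩, hρeq⟩, hρmin⟩ := hρv
  have hu1 : u ≤ 1 := le_trans huρ.le hρ1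
  -- summability facts
  have hsb : Summable (fun j : ℕ => if j = 1 then 0 else b j) := hb_sum.summable
  have habs : Summable (fun j : ℕ => |b j|) := by
    have h2 : Summable (fun j : ℕ => if j = 1 then |b 1| else 0) := by
      apply summable_of_ne_finset_zero (s := {1})
      intro j hj
      simp only [Finset.mem_singleton] at hj
      simp [hj]
    have h1 : (fun j : ℕ => |b j|)
        = fun j => (if j = 1 then 0 else b j) + (if j = 1 then |b 1| else 0) := by
      funext j
      by_cases h : j = 1
      · simp [h]
      · simp [h, abs_of_nonneg (hb_nonneg j h)]
    rw [h1]
    exact hsb.add h2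
  have hbound : ∀ (x : ℝ), |x| ≤ 1 → ∀ j : ℕ,
      |(if j ∈ N then 0 else b j * x ^ j)| ≤ |b j| := by
    intro x hx j
    by_cases h : j ∈ N
    · simp [h]
    · simp only [if_neg h, abs_mul, abs_pow]
      calc |b j| * |x| ^ j ≤ |b j| * 1 := by
            apply mul_le_mul_of_nonneg_left _ (abs_nonneg _)
            exact pow_le_one₀ (abs_nonneg x) hx
        _ = |b j| := mul_one _
  have hgsum : ∀ x : ℝ, |x| ≤ 1 →
      Summable (fun j : ℕ => if j ∈ N then 0 else b j * x ^ j) := by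
    intro x hx
    apply Summable.of_norm_bounded habs
    intro j
    simpa [Real.norm_eq_abs] using hbound x hx j
  set c : ℕ → ℝ := fun j => if j ∈ N ∨ j = 1 then 0 else b j with hc
  have hc_nonneg : ∀ j, 0 ≤ c j := by
    intro j
    by_cases h : j ∈ N ∨ j = 1
    · simp [hc, h]
    · push_neg at h
      simp only [hc, if_neg (by tauto : ¬(j ∈ N ∨ j = 1))]
      exact hb_nonneg j h.2
  have hcsum : ∀ x : ℝ, |x| ≤ 1 → Summable (fun j : ℕ => c j * x ^ j) := by
    intro x hx
    apply Summable.of_norm_bounded habs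
    intro j
    by_cases h : j ∈ N ∨ j = 1
    · simp [hc, h]
    · push_neg at h
      simp only [hc, if_neg (by tauto : ¬(j ∈ N ∨ j = 1)), Real.norm_eq_abs, abs_mul, abs_pow]
      calc |b j| * |x| ^ j ≤ |b j| * 1 := by
            apply mul_le_mul_of_nonneg_left _ (abs_nonneg _)
            exact pow_le_one₀ (abs_nonneg x) hx
        _ = |b j| := mul_one _
  have hHrep : ∀ x : ℝ, |x| ≤ 1 →
      H x = (∑ j ∈ N, b j * v j * x ^ j) + ∑' j : ℕ, c j * x ^ j := by
    intro x hx
    rw [hH, Summable.tsum_eq_add_tsum_ite (hgsum x hx) 1]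
    have hrw : (∑' j : ℕ, if j = 1 then 0 else if j ∈ N then 0 else b j * x ^ j)
        = ∑' j : ℕ, c j * x ^ j := by
      apply tsum_congr
      intro j
      by_cases h1 : j = 1
      · simp [h1, hc]
      · by_cases h2 : j ∈ N <;> simp [h1, h2, hc]
    rw [hrw]
    simp only [if_neg h1N, pow_one]
    ring
  -- monotonicity of H on [0,1]
  have hmono : ∀ x x' : ℝ, 0 ≤ x → x ≤ x' → x' ≤ 1 → H x ≤ H x' := by
    intro x x' hx hxx' hx'
    have hx1 : |x| ≤ 1 := by rw [abs_of_nonneg hx]; linarith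
    have hx'0 : 0 ≤ x' := le_trans hx hxx'
    have hx'1 : |x'| ≤ 1 := by rw [abs_of_nonneg hx'0]; exact hx'
    rw [hHrep x hx1, hHrep x' hx'1]
    apply add_le_add
    · apply Finset.sum_le_sum
      intro j hj
      have hbj := (hbN j hj).le
      have hvj := (hv j hj).1
      have hpow : x ^ j ≤ x' ^ j := pow_le_pow_left₀ hx hxx' j
      have : 0 ≤ b j * v j := mul_nonneg hbj hvj
      calc b j * v j * x ^ j ≤ b j * v j * x' ^ j := by
            exact mul_le_mul_of_nonneg_left hpow this
        _ = b j * v j * x' ^ j := rfl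
    · apply Summable.tsum_le_tsum _ (hcsum x hx1) (hcsum x' hx'1)
      intro j
      exact mul_le_mul_of_nonneg_left (pow_le_pow_left₀ hx hxx' j) (hc_nonneg j)
  -- value of H at ρv
  have hρ1' : |ρv| ≤ 1 := by rw [abs_of_nonneg hρ0]; exact hρ1
  have hHρ : H ρv = -b 1 * ρv := by
    rw [hH]
    linarith [hρeq]
  -- continuity of the tsum
  have hTcont : ContinuousOn (fun x : ℝ => ∑' j : ℕ, if j ∈ N then 0 else b j * x ^ j)
      (Set.Icc (-1 : ℝ) 1) := by
    apply continuousOn_tsum (u := fun j => |b j|) _ habs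
    · intro j x hx
      have hx1 : |x| ≤ 1 := abs_le.2 ⟨hx.1, hx.2⟩
      simpa [Real.norm_eq_abs] using hbound x hx1 j
    · intro j
      by_cases h : j ∈ N
      · simp only [if_pos h]
        exact continuousOn_const
      · simp only [if_neg h]
        exact (continuous_const.mul (continuous_pow j)).continuousOn
  have hHcont : ContinuousOn H (Set.Icc (-1 : ℝ) 1) := by
    have hcont : ContinuousOn (fun x : ℝ => (∑ j ∈ N, b j * v j * x ^ j)
        + (∑' j : ℕ, if j ∈ N then 0 else b j * x ^ j) - b 1 * x) (Set.Icc (-1 : ℝ) 1) := by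
      apply ContinuousOn.sub
      · apply ContinuousOn.add _ hTcont
        exact (continuous_finset_sum N fun j _ =>
          (continuous_const.mul (continuous_pow j))).continuousOn
      · exact (continuous_const.mul continuous_id).continuousOn
    exact hcont.congr (fun x _ => hH x)
  -- H u ≥ -b1 u  (the "G ≥ 0 below ρv" argument)
  have hHu : -b 1 * u ≤ H u := by
    by_contra hcon
    push_neg at hcon
    set G : ℝ → ℝ := fun x => (∑' j : ℕ, if j ∈ N then 0 else b j * x ^ j)
      + ∑ j ∈ N, b j * v j * x ^ j with hG
    have hGH : ∀ x, G x = H x + b 1 * x := by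
      intro x
      rw [hG, hH]
      ring
    have hGu : G u < 0 := by rw [hGH]; linarith
    have hG0 : 0 ≤ G 0 := by
      have hT0 : (∑' j : ℕ, if j ∈ N then 0 else b j * (0 : ℝ) ^ j)
          = if 0 ∈ N then 0 else b 0 := by
        rw [tsum_eq_single 0]
        · simp
        · intro j hj
          by_cases h : j ∈ N <;> simp [h, zero_pow hj]
      rw [hG]
      simp only [hT0]
      have h1 : 0 ≤ (if 0 ∈ N then (0:ℝ) else b 0) := by
        by_cases h : 0 ∈ N <;> simp [h, hb_nonneg 0 (by norm_num)]
      have h2 : 0 ≤ ∑ j ∈ N, b j * v j * (0:ℝ) ^ j := by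
        apply Finset.sum_nonneg
        intro j hj
        exact mul_nonneg (mul_nonneg (hbN j hj).le (hv j hj).1)
          (pow_nonneg le_rfl j)
      linarith
    have hGcont : ContinuousOn G (Set.Icc 0 u) := by
      have hsub : Set.Icc (0 : ℝ) u ⊆ Set.Icc (-1 : ℝ) 1 :=
        Set.Icc_subset_Icc (by norm_num) hu1
      have hc1 : ContinuousOn G (Set.Icc (-1 : ℝ) 1) := by
        have hlin : ContinuousOn (fun x : ℝ => b 1 * x) (Set.Icc (-1 : ℝ) 1) :=
          (continuous_const.mul continuous_id).continuousOn
        exact (hHcont.add hlin).congr (fun x _ => hGH x)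
      exact hc1.mono hsub
    have h0mem : (0 : ℝ) ∈ Set.Icc (G u) (G 0) := ⟨hGu.le, hG0⟩
    obtain ⟨w, hw, hGw⟩ := intermediate_value_Icc' hu0 hGcont h0mem
    have hge : ρv ≤ w := hρmin ⟨⟨hw.1, le_trans hw.2 hu1⟩, hGw⟩
    linarith [hw.2]
  -- continuity helpers
  have hce : Continuous (fun s : ℝ => Real.exp (-(b 1 * s))) :=
    Real.continuous_exp.comp ((continuous_const.mul continuous_id).neg)
  have hce' : Continuous (fun t : ℝ => Real.exp (b 1 * t)) :=
    Real.continuous_exp.comp (continuous_const.mul continuous_id)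
  -- exponential integral computation
  have hexpint : ∀ r t : ℝ,
      (∫ s in (0 : ℝ)..t, Real.exp (-(b 1 * s)) * (-b 1 * r))
        = r * (Real.exp (-(b 1 * t)) - 1) := by
    intro r t
    have key : ∀ s : ℝ, HasDerivAt (fun s : ℝ => r * Real.exp (-(b 1 * s)))
        (Real.exp (-(b 1 * s)) * (-b 1 * r)) s := by
      intro s
      have h1 : HasDerivAt (fun s : ℝ => -(b 1 * s)) (-b 1) s := by
        simpa using ((hasDerivAt_id s).const_mul (b 1)).fun_neg
      have h3 := (h1.exp).const_mul r
      rw [show Real.exp (-(b 1 * s)) * (-b 1 * r) = r * (Real.exp (-(b 1 * s)) * -b 1) by ring]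
      exact h3
    rw [intervalIntegral.integral_eq_sub_of_hasDerivAt (fun s _ => key s)
      ((hce.mul continuous_const).intervalIntegrable _ _)]
    simp [Real.exp_zero]
    ring
  -- main induction: continuity + bounds
  have key : ∀ n : ℕ,
      (∀ T : ℝ, 0 ≤ T → ContinuousOn (y n) (Set.Icc 0 T)) ∧
      (∀ t : ℝ, 0 ≤ t → u ≤ y n t ∧ y n t < ρv) := by
    intro n
    induction n with
    | zero =>
      constructor
      · intro T hT
        have : ∀ t ∈ Set.Icc (0:ℝ) T, y 0 t = u := fun t _ => hy0 t
        exact continuousOn_const.congr this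
      · intro t ht
        rw [hy0]
        exact ⟨le_rfl, huρ⟩
    | succ n ih =>
      obtain ⟨ihc, ihb⟩ := ih
      have hmaps : ∀ t : ℝ, 0 ≤ t → y n t ∈ Set.Icc (-1 : ℝ) 1 := by
        intro t ht
        obtain ⟨h1, h2⟩ := ihb t ht
        constructor <;> linarith
      have hfc : ∀ T : ℝ, 0 ≤ T →
          ContinuousOn (fun s => Real.exp (-(b 1 * s)) * H (y n s)) (Set.Icc 0 T) := by
        intro T hT
        apply ContinuousOn.mul
        · exact (Real.continuous_exp.comp ((continuous_const.mul continuous_id).neg)).continuousOn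
        · exact hHcont.comp (ihc T hT) (fun s hs => hmaps s hs.1)
      have hint : ∀ t : ℝ, 0 ≤ t →
          IntervalIntegrable (fun s => Real.exp (-(b 1 * s)) * H (y n s))
            MeasureTheory.volume 0 t := by
        intro t ht
        exact (hfc t ht).intervalIntegrable_of_Icc ht
      constructor
      · intro T hT
        have hprim : ContinuousOn
            (fun t => ∫ s in (0 : ℝ)..t, Real.exp (-(b 1 * s)) * H (y n s))
            (Set.Icc 0 T) := by
          have := intervalIntegral.continuousOn_primitive_interval
            (f := fun s => Real.exp (-(b 1 * s)) * H (y n s))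
            (a := (0:ℝ)) (b := T) (μ := MeasureTheory.volume) ?_
          · rwa [Set.uIcc_of_le hT] at this
          · rw [Set.uIcc_of_le hT]
            exact (hfc T hT).integrableOn_Icc
        have hcont : ContinuousOn
            (fun t => Real.exp (b 1 * t) *
              (u + ∫ s in (0 : ℝ)..t, Real.exp (-(b 1 * s)) * H (y n s)))
            (Set.Icc 0 T) := by
          exact ContinuousOn.mul hce'.continuousOn (continuousOn_const.add hprim)
        exact hcont.congr (fun t _ => hyrec n t)
      · intro t ht
        rw [hyrec n t]
        have hee : Real.exp (b 1 * t) * Real.exp (-(b 1 * t)) = 1 := by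
          rw [← Real.exp_add]
          simp
        have hpos : (0 : ℝ) < Real.exp (b 1 * t) := Real.exp_pos _
        constructor
        · -- lower bound
          have hle : ∀ s ∈ Set.Icc (0 : ℝ) t,
              Real.exp (-(b 1 * s)) * (-b 1 * u) ≤ Real.exp (-(b 1 * s)) * H (y n s) := by
            intro s hs
            obtain ⟨h1, h2⟩ := ihb s hs.1
            apply mul_le_mul_of_nonneg_left _ (Real.exp_nonneg _)
            calc -b 1 * u ≤ H u := hHu
              _ ≤ H (y n s) := hmono u (y n s) hu0 h1 (by linarith)
          have hI1 : IntervalIntegrable (fun s => Real.exp (-(b 1 * s)) * (-b 1 * u))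
              MeasureTheory.volume 0 t :=
            (hce.mul continuous_const).intervalIntegrable _ _
          have hIle := intervalIntegral.integral_mono_on ht hI1 (hint t ht) hle
          rw [hexpint u t] at hIle
          nlinarith [hIle, hee, hpos]
        · -- upper bound
          have hle : ∀ s ∈ Set.Icc (0 : ℝ) t,
              Real.exp (-(b 1 * s)) * H (y n s) ≤ Real.exp (-(b 1 * s)) * (-b 1 * ρv) := by
            intro s hs
            obtain ⟨h1, h2⟩ := ihb s hs.1
            apply mul_le_mul_of_nonneg_left _ (Real.exp_nonneg _)
            rw [← hHρ]
            exact hmono (y n s) ρv (by linarith) h2.le hρ1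
          have hI1 : IntervalIntegrable (fun s => Real.exp (-(b 1 * s)) * (-b 1 * ρv))
              MeasureTheory.volume 0 t :=
            (hce.mul continuous_const).intervalIntegrable _ _
          have hIle := intervalIntegral.integral_mono_on ht (hint t ht) hI1 hle
          rw [hexpint ρv t] at hIle
          nlinarith [hIle, hee, hpos, huρ]
  -- integrability for all n (restated outside the induction)
  have hint : ∀ (n : ℕ) (t : ℝ), 0 ≤ t →
      IntervalIntegrable (fun s => Real.exp (-(b 1 * s)) * H (y n s))
        MeasureTheory.volume 0 t := by
    intro n t ht
    apply ContinuousOn.intervalIntegrable_of_Icc ht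
    apply ContinuousOn.mul hce.continuousOn
    apply hHcont.comp ((key n).1 t ht)
    intro s hs
    obtain ⟨h1, h2⟩ := (key n).2 s hs.1
    constructor <;> linarith
  -- monotonicity in n
  have mono : ∀ (n : ℕ) (t : ℝ), 0 ≤ t → y n t ≤ y (n + 1) t := by
    intro n
    induction n with
    | zero =>
      intro t ht
      rw [hy0]
      exact ((key 1).2 t ht).1
    | succ n ih =>
      intro t ht
      rw [hyrec n t, hyrec (n + 1) t]
      apply mul_le_mul_of_nonneg_left _ (Real.exp_pos _).le
      apply add_le_add_right
      apply intervalIntegral.integral_mono_on ht (hint n t ht) (hint (n + 1) t ht)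
      intro s hs
      apply mul_le_mul_of_nonneg_left _ (Real.exp_nonneg _)
      exact hmono (y n s) (y (n + 1) s)
        (le_trans hu0 ((key n).2 s hs.1).1) (ih s hs.1)
        (le_trans ((key (n + 1)).2 s hs.1).2.le hρ1)
  intro n t ht
  exact ⟨((key n).2 t ht).1, ((key n).2 t ht).2, mono n t ht⟩
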